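/- arXiv:0911.2022 — 2 statements merged into one kernel-verified Lean document; each statement's English description precedes it below -/
import Mathlib

section
/- (Fourier-Motzkin elimination step in the proof of Theorem 1) Let hS, hSK, hT, hTK and a1, a2, a3, a4, a5, b1, b2, b3, b4, b5 be real numbers satisfying a1 <= a3 <= a4, a2 <= a4, b1 <= b3 <= b4, and b2 <= b4. Then there exist real numbers r1 >= 0 and r2 >= 0 satisfying the ten strict inequalities hSK - r1 < a1; hSK < a2; hSK - r1 + r2 < a3; hSK + r2 < a4; hS + r2 < a5; hTK - r2 < b1; hTK < b2; hTK - r2 + r1 < b3; hTK + r1 < b4; hT + r1 < b5; if and only if the following thirteen inequalities hold: hSK < a2; hTK < b2; hS < a5; hT < b5; hSK + hTK < a1 + b4; hSK + hTK < b1 + a4; hSK + hTK < a3 + b3; hSK + hT < a1 + b5; hS + hTK < a5 + b1; 2·hSK + hTK < a1 + a4 + b3; hSK + 2·hTK < b1 + b4 + a3; hS + hSK + hTK < a1 + a5 + b3; hT + hSK + hTK < b1 + b5 + a3. -/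
/-- **Fourier-Motzkin elimination step in the proof of Theorem 1.**  Under the ordering
hypotheses `a1 ≤ a3 ≤ a4`, `a2 ≤ a4`, `b1 ≤ b3 ≤ b4`, `b2 ≤ b4`, there exist
nonnegative `r1, r2` satisfying the ten strict inequalities of the coding scheme iff the
thirteen inequalities of Theorem 1 hold. -/
theorem fourier_motzkin_step_theorem1
    (hS hSK hT hTK a1 a2 a3 a4 a5 b1 b2 b3 b4 b5 : ℝ)
    (ha13 : a1 ≤ a3) (ha34 : a3 ≤ a4) (ha24 : a2 ≤ a4)
    (hb13 : b1 ≤ b3) (hb34 : b3 ≤ b4) (hb24 : b2 ≤ b4) :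
    (∃ r1 r2 : ℝ, 0 ≤ r1 ∧ 0 ≤ r2 ∧
      hSK - r1 < a1 ∧ hSK < a2 ∧ hSK - r1 + r2 < a3 ∧ hSK + r2 < a4 ∧ hS + r2 < a5 ∧
      hTK - r2 < b1 ∧ hTK < b2 ∧ hTK - r2 + r1 < b3 ∧ hTK + r1 < b4 ∧ hT + r1 < b5) ↔
    (hSK < a2 ∧ hTK < b2 ∧ hS < a5 ∧ hT < b5 ∧
      hSK + hTK < a1 + b4 ∧ hSK + hTK < b1 + a4 ∧ hSK + hTK < a3 + b3 ∧
      hSK + hT < a1 + b5 ∧ hS + hTK < a5 + b1 ∧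
      2 * hSK + hTK < a1 + a4 + b3 ∧ hSK + 2 * hTK < b1 + b4 + a3 ∧
      hS + hSK + hTK < a1 + a5 + b3 ∧ hT + hSK + hTK < b1 + b5 + a3) := by
  constructor
  · rintro ⟨r1, r2, hr1, hr2, h1, h2, h3, h4, h5, h6, h7, h8, h9, h10⟩
    refine ⟨?_, ?_, ?_, ?_, ?_, ?_, ?_, ?_, ?_, ?_, ?_, ?_, ?_⟩ <;> linarith
  · rintro ⟨c1, c2, c3, c4, c5, c6, c7, c8, c9, c10, c11, c12, c13⟩
    -- choose r2 between its lower and upper bounds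
    have hL2U2 : max (max 0 (hTK - b1)) (hSK + hTK - a1 - b3) <
        min (min (a4 - hSK) (a5 - hS)) (min (a3 + b4 - hSK - hTK) (a3 + b5 - hSK - hT)) := by
      simp only [max_lt_iff, lt_min_iff]
      and_intros <;> linarith
    obtain ⟨r2, hr2L, hr2U⟩ := exists_between hL2U2
    simp only [max_lt_iff, lt_min_iff] at hr2L hr2U
    obtain ⟨⟨hr2a, hr2b⟩, hr2c⟩ := hr2L
    obtain ⟨⟨hr2d, hr2e⟩, hr2f, hr2g⟩ := hr2U
    -- choose r1 between its lower and upper bounds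
    have hL1U1 : max (max 0 (hSK - a1)) (hSK - a3 + r2) <
        min (min (b3 - hTK + r2) (b4 - hTK)) (b5 - hT) := by
      simp only [max_lt_iff, lt_min_iff]
      and_intros <;> linarith
    obtain ⟨r1, hr1L, hr1U⟩ := exists_between hL1U1
    simp only [max_lt_iff, lt_min_iff] at hr1L hr1U
    obtain ⟨⟨hr1a, hr1b⟩, hr1c⟩ := hr1L
    obtain ⟨⟨hr1d, hr1e⟩, hr1f⟩ := hr1U
    exact ⟨r1, r2, le_of_lt hr1a, le_of_lt hr2a, by linarith, c1, by linarith, by linarith,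
      by linarith, by linarith, c2, by linarith, by linarith, by linarith⟩
end

section
/- (Separation gap) Let (S,T) be the triangular source: {0,1}-valued random variables with Pr(S=0,T=0) = Pr(S=1,T=0) = Pr(S=1,T=1) = 1/3 and Pr(S=0,T=1) = 0. Then for every pair of independent {0,1}-valued random variables X1, X2, one has H(X1 + X2) <= 3/2 < log2(3) = H(S,T). In particular there is no product input distribution p(x1)p(x2) for the deterministic interference channel Y1 = X1, Y2 = X1 + X2 under which H(Y2) >= H(S,T), so the Slepian-Wolf rate region of the source and the capacity region of the channel do not intersect. -/
/-- Shannon entropy (in bits) of the push-forward of the pmf `p` under the map `f`. -/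
noncomputable def margEnt {Ω α : Type*} [Fintype Ω] [Fintype α] [DecidableEq α]
    (p : Ω → ℝ) (f : Ω → α) : ℝ :=
  ∑ a : α, -((∑ ω : Ω, if f ω = a then p ω else 0) *
      Real.logb 2 (∑ ω : Ω, if f ω = a then p ω else 0))

open Fin.NatCast

section Aux

open Real

private lemma logDiff_ge_aux (t : ℝ) (h0 : 0 ≤ t) (h1 : t < 1) :
    2 * t ≤ Real.log (1 + t) - Real.log (1 - t) := by
  set g : ℝ → ℝ := fun x => Real.log (1 + x) - Real.log (1 - x) - 2 * x with hg
  have key : ∀ x ∈ Set.Ico (0:ℝ) 1, 0 ≤ g x := by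
    have hmono : MonotoneOn g (Set.Ico (0:ℝ) 1) := by
      have hderiv : ∀ x ∈ Set.Ico (0:ℝ) 1,
          HasDerivAt g (1 / (1 + x) - (-1) / (1 - x) - 2) x := by
        intro x hx
        have h1x : (1:ℝ) + x ≠ 0 := by nlinarith [hx.1, hx.2]
        have h2x : (1:ℝ) - x ≠ 0 := by nlinarith [hx.1, hx.2]
        have d1 : HasDerivAt (fun y : ℝ => 1 + y) 1 x := (hasDerivAt_id x).const_add 1
        have d2 : HasDerivAt (fun y : ℝ => 1 - y) (-1) x := by
          simpa using (hasDerivAt_id x).const_sub 1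
        have dl1 := d1.log h1x
        have dl2 := d2.log h2x
        have dlin : HasDerivAt (fun y : ℝ => 2 * y) 2 x := by
          simpa using (hasDerivAt_id x).const_mul 2
        exact (dl1.sub dl2).sub dlin
      apply monotoneOn_of_deriv_nonneg (convex_Ico 0 1)
      · intro x hx
        exact (hderiv x hx).continuousAt.continuousWithinAt
      · intro x hx
        rw [interior_Ico] at hx
        exact (hderiv x (Set.mem_Ico.mpr ⟨le_of_lt hx.1, hx.2⟩)).differentiableAt.differentiableWithinAt
      · intro x hx
        rw [interior_Ico] at hx
        rw [(hderiv x (Set.mem_Ico.mpr ⟨le_of_lt hx.1, hx.2⟩)).deriv]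
        have hx0 : (0:ℝ) < 1 + x := by linarith [hx.1]
        have hx1 : (0:ℝ) < 1 - x := by linarith [hx.2]
        rw [div_sub_div _ _ (ne_of_gt hx0) (ne_of_gt hx1), sub_nonneg, le_div_iff₀ (by positivity)]
        nlinarith [sq_nonneg x]
    intro x hx
    have h0g : g 0 = 0 := by simp [hg]
    have := hmono (Set.mem_Ico.mpr ⟨le_refl 0, one_pos⟩) hx hx.1
    linarith [h0g ▸ this]
  have := key t (Set.mem_Ico.mpr ⟨h0, h1⟩)
  simp only [hg] at this
  linarith

private lemma F_nonneg_aux (t : ℝ) (h0 : 0 ≤ t) (h1 : t < 1) :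
    t ^ 2 ≤ (1 + t) * Real.log (1 + t) + (1 - t) * Real.log (1 - t) := by
  set F : ℝ → ℝ := fun x => (1 + x) * Real.log (1 + x) + (1 - x) * Real.log (1 - x) - x ^ 2
    with hF
  have hderiv : ∀ x ∈ Set.Ico (0:ℝ) 1,
      HasDerivAt F (1 * Real.log (1 + x) + (1 + x) * (1 / (1 + x))
        + ((-1) * Real.log (1 - x) + (1 - x) * ((-1) / (1 - x))) - 2 * x) x := by
    intro x hx
    have h1x : (1:ℝ) + x ≠ 0 := by nlinarith [hx.1, hx.2]
    have h2x : (1:ℝ) - x ≠ 0 := by nlinarith [hx.1, hx.2]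
    have d1 : HasDerivAt (fun y : ℝ => 1 + y) 1 x := (hasDerivAt_id x).const_add 1
    have d2 : HasDerivAt (fun y : ℝ => 1 - y) (-1) x := by
      simpa using (hasDerivAt_id x).const_sub 1
    have dsq : HasDerivAt (fun y : ℝ => y ^ 2) (2 * x) x := by
      simpa using hasDerivAt_pow 2 x
    exact ((d1.mul (d1.log h1x)).add (d2.mul (d2.log h2x))).sub dsq
  have hmono : MonotoneOn F (Set.Ico (0:ℝ) 1) := by
    apply monotoneOn_of_deriv_nonneg (convex_Ico 0 1)
    · intro x hx
      exact (hderiv x hx).continuousAt.continuousWithinAt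
    · intro x hx
      rw [interior_Ico] at hx
      exact (hderiv x ⟨le_of_lt hx.1, hx.2⟩).differentiableAt.differentiableWithinAt
    · intro x hx
      rw [interior_Ico] at hx
      rw [(hderiv x ⟨le_of_lt hx.1, hx.2⟩).deriv]
      have h1x : (1:ℝ) + x ≠ 0 := by nlinarith [hx.1, hx.2]
      have h2x : (1:ℝ) - x ≠ 0 := by nlinarith [hx.1, hx.2]
      have hld := logDiff_ge_aux x (le_of_lt hx.1) hx.2
      have e1 : (1 + x) * (1 / (1 + x)) = 1 := by field_simp
      have e2 : (1 - x) * ((-1) / (1 - x)) = -1 := by field_simp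
      rw [e1, e2]
      linarith
  have hF0 : F 0 = 0 := by simp [hF]
  have := hmono (Set.mem_Ico.mpr ⟨le_refl 0, one_pos⟩) ⟨h0, h1⟩ h0
  rw [hF0] at this
  simp only [hF] at this
  linarith

private lemma F_nonneg (t : ℝ) (h0 : -1 < t) (h1 : t < 1) :
    t ^ 2 ≤ (1 + t) * Real.log (1 + t) + (1 - t) * Real.log (1 - t) := by
  rcases le_or_gt 0 t with h | h
  · exact F_nonneg_aux t h h1
  · have := F_nonneg_aux (-t) (by linarith) (by linarith)
    have e1 : (1 : ℝ) + -t = 1 - t := by ring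
    have e2 : (1 : ℝ) - -t = 1 + t := by ring
    rw [e1, e2] at this
    nlinarith [this]

private lemma pinsker_nat (s : ℝ) (h0 : 0 < s) (h1 : s < 1) :
    -(s * Real.log s) - (1 - s) * Real.log (1 - s) ≤ Real.log 2 - (1 - 2*s)^2 / 2 := by
  have hF := F_nonneg (1 - 2*s) (by linarith) (by linarith)
  have e1 : (1 : ℝ) + (1 - 2*s) = 2 * (1 - s) := by ring
  have e2 : (1 : ℝ) - (1 - 2*s) = 2 * s := by ring
  rw [e1, e2, Real.log_mul (by norm_num) (by linarith), Real.log_mul (by norm_num) (ne_of_gt h0)]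
    at hF
  nlinarith [hF]

private lemma gibbs_term (p q : ℝ) (hp : 0 ≤ p) (hq : 0 < q) :
    -(p * Real.log p) ≤ -(p * Real.log q) + (q - p) := by
  rcases eq_or_lt_of_le hp with h | h
  · simp [← h]; linarith
  · have hlog : Real.log (q / p) ≤ q / p - 1 := Real.log_le_sub_one_of_pos (by positivity)
    rw [Real.log_div (ne_of_gt hq) (ne_of_gt h)] at hlog
    have := mul_le_mul_of_nonneg_left hlog hp
    have hp' : p ≠ 0 := ne_of_gt h
    rw [mul_sub, mul_sub, mul_div_cancel₀ _ hp'] at this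
    nlinarith [this]

set_option maxHeartbeats 1000000 in
private lemma key_nat (a b : ℝ) (ha0 : 0 ≤ a) (ha1 : a ≤ 1) (hb0 : 0 ≤ b) (hb1 : b ≤ 1) :
    -((1-a)*(1-b) * Real.log ((1-a)*(1-b)))
      + -((a*(1-b) + (1-a)*b) * Real.log (a*(1-b) + (1-a)*b))
      + -(a*b * Real.log (a*b)) ≤ 3/2 * Real.log 2 := by
  have hln2 : (0:ℝ) < Real.log 2 := Real.log_pos (by norm_num)
  rcases eq_or_lt_of_le (by nlinarith : (0:ℝ) ≤ (a+b)/2) with hs0 | hs0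
  · have haz : a = 0 := by nlinarith
    have hbz : b = 0 := by nlinarith
    rw [haz, hbz]; norm_num; linarith
  rcases eq_or_lt_of_le (by nlinarith : (a+b)/2 ≤ 1) with hs1 | hs1
  · have haz : a = 1 := by nlinarith
    have hbz : b = 1 := by nlinarith
    rw [haz, hbz]; norm_num; linarith
  set u := (1-a)*(1-b) with hu
  set v := a*(1-b) + (1-a)*b with hv
  set w := a*b with hw
  set s := (a + b) / 2 with hs
  clear_value u v w s
  have h1s : (0:ℝ) < 1 - s := by linarith
  have hq0 : (0:ℝ) < (1-s)^2 := by positivity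
  have hq1 : (0:ℝ) < 2*s*(1-s) := by positivity
  have hq2 : (0:ℝ) < s^2 := by positivity
  have hu0 : 0 ≤ u := by rw [hu]; nlinarith
  have hv0 : 0 ≤ v := by rw [hv]; nlinarith
  have hw0 : 0 ≤ w := by rw [hw]; nlinarith
  have g0 := gibbs_term u ((1-s)^2) hu0 hq0
  have g1 := gibbs_term v (2*s*(1-s)) hv0 hq1
  have g2 := gibbs_term w (s^2) hw0 hq2
  have hsump : u + v + w = 1 := by rw [hu, hv, hw]; ring
  set Ls := Real.log s with hLs
  set L1 := Real.log (1-s) with hL1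
  set L2 := Real.log 2 with hL2
  clear_value Ls L1 L2
  have l0 : Real.log ((1-s)^2) = 2 * L1 := by
    rw [hL1, Real.log_pow]; push_cast; ring
  have l2 : Real.log (s^2) = 2 * Ls := by
    rw [hLs, Real.log_pow]; push_cast; ring
  have l1 : Real.log (2*s*(1-s)) = L2 + Ls + L1 := by
    rw [hL2, hLs, hL1, Real.log_mul (by positivity) (by linarith),
      Real.log_mul (by norm_num) (by linarith)]
  rw [l0] at g0; rw [l1] at g1; rw [l2] at g2
  have e1 : (2*u + v) * L1 = 2*(1-s)*L1 := by
    have : 2*u + v = 2*(1-s) := by rw [hu, hv, hs]; ring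
    rw [this]
  have e2 : (2*w + v) * Ls = 2*s*Ls := by
    have : 2*w + v = 2*s := by rw [hw, hv, hs]; ring
    rw [this]
  have hcross : -(u * Real.log u) + -(v * Real.log v) + -(w * Real.log w)
      ≤ -(2*(1-s)*L1) - 2*s*Ls - v*L2 := by
    have r1 : -(u*(2*L1)) + -(v*(L2+Ls+L1)) + -(w*(2*Ls))
        = -((2*u+v)*L1) - (2*w+v)*Ls - v*L2 := by ring
    have hq : (1-s)^2 + 2*s*(1-s) + s^2 = 1 := by ring
    linarith only [g0, g1, g2, e1, e2, hsump, hq, r1]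
  have hpin := pinsker_nat s hs0 hs1
  rw [← hLs, ← hL1, ← hL2] at hpin
  have hvge : 2*s*(1-s) ≤ v := by rw [hv, hs]; nlinarith [sq_nonneg (a-b)]
  have hmul : 2*s*(1-s)*L2 ≤ v*L2 := mul_le_mul_of_nonneg_right hvge (le_of_lt hln2)
  have hln2le : L2 ≤ 1 := by
    rw [hL2]
    have := Real.log_le_sub_one_of_pos (by norm_num : (0:ℝ) < 2); linarith
  have hsq : (1-2*s)^2 * L2 ≤ (1-2*s)^2 := by
    nlinarith [mul_le_mul_of_nonneg_left hln2le (sq_nonneg (1-2*s))]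
  linarith only [hcross, hpin, hmul, hsq, sq_nonneg (1 - 2*s)]

private lemma key_bits (a b : ℝ) (ha0 : 0 ≤ a) (ha1 : a ≤ 1) (hb0 : 0 ≤ b) (hb1 : b ≤ 1) :
    -((1-a)*(1-b) * Real.logb 2 ((1-a)*(1-b)))
      + -((a*(1-b) + (1-a)*b) * Real.logb 2 (a*(1-b) + (1-a)*b))
      + -(a*b * Real.logb 2 (a*b)) ≤ 3/2 := by
  have hln2 : (0:ℝ) < Real.log 2 := Real.log_pos (by norm_num)
  have hk := key_nat a b ha0 ha1 hb0 hb1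
  have heq : -((1-a)*(1-b) * Real.logb 2 ((1-a)*(1-b)))
      + -((a*(1-b) + (1-a)*b) * Real.logb 2 (a*(1-b) + (1-a)*b))
      + -(a*b * Real.logb 2 (a*b))
      = (-((1-a)*(1-b) * Real.log ((1-a)*(1-b)))
        + -((a*(1-b) + (1-a)*b) * Real.log (a*(1-b) + (1-a)*b))
        + -(a*b * Real.log (a*b))) / Real.log 2 := by
    simp only [Real.logb]; ring
  rw [heq, div_le_iff₀ hln2]
  linarith

/-- Entropy bound for the sum of two independent boolean inputs. -/
private lemma entropy_sum_le {Ω' : Type*} [Fintype Ω'] (p' : Ω' → ℝ)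
    (hp'nn : ∀ ω, 0 ≤ p' ω) (hp'sum : ∑ ω : Ω', p' ω = 1) (X1 X2 : Ω' → Bool)
    (hindep : ∀ b1 b2 : Bool,
      (∑ ω : Ω', if X1 ω = b1 ∧ X2 ω = b2 then p' ω else 0) =
        (∑ ω : Ω', if X1 ω = b1 then p' ω else 0) *
          (∑ ω : Ω', if X2 ω = b2 then p' ω else 0)) :
    margEnt p' (fun ω => (((X1 ω).toNat + (X2 ω).toNat : ℕ) : Fin 3)) ≤ 3 / 2 := by
  set a := ∑ ω : Ω', if X1 ω = true then p' ω else 0 with ha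
  set b := ∑ ω : Ω', if X2 ω = true then p' ω else 0 with hb
  have hmargf : ∀ (X : Ω' → Bool), (∑ ω : Ω', if X ω = false then p' ω else 0)
      = 1 - ∑ ω : Ω', if X ω = true then p' ω else 0 := by
    intro X
    rw [← hp'sum, ← Finset.sum_sub_distrib]
    apply Finset.sum_congr rfl
    intro ω _
    cases hx1 : X ω <;> simp [hx1]
  have ha0 : 0 ≤ a := Finset.sum_nonneg fun ω _ => by
    split <;> simp [hp'nn ω]
  have hb0 : 0 ≤ b := Finset.sum_nonneg fun ω _ => by
    split <;> simp [hp'nn ω]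
  have ha1 : a ≤ 1 := by
    have h := hmargf X1
    have : 0 ≤ (∑ ω : Ω', if X1 ω = false then p' ω else 0) :=
      Finset.sum_nonneg fun ω _ => by split <;> simp [hp'nn ω]
    rw [h] at this; linarith
  have hb1 : b ≤ 1 := by
    have h := hmargf X2
    have : 0 ≤ (∑ ω : Ω', if X2 ω = false then p' ω else 0) :=
      Finset.sum_nonneg fun ω _ => by split <;> simp [hp'nn ω]
    rw [h] at this; linarith
  have hm0 : (∑ ω : Ω', if (((X1 ω).toNat + (X2 ω).toNat : ℕ) : Fin 3) = 0
      then p' ω else 0) = (1-a)*(1-b) := by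
    have : (∑ ω : Ω', if (((X1 ω).toNat + (X2 ω).toNat : ℕ) : Fin 3) = 0 then p' ω else 0)
        = ∑ ω : Ω', if X1 ω = false ∧ X2 ω = false then p' ω else 0 := by
      apply Finset.sum_congr rfl
      intro ω _
      cases hx1 : X1 ω <;> cases hx2 : X2 ω <;> simp [hx1, hx2]
    rw [this, hindep false false, hmargf X1, hmargf X2]
  have hm1 : (∑ ω : Ω', if (((X1 ω).toNat + (X2 ω).toNat : ℕ) : Fin 3) = 1
      then p' ω else 0) = a*(1-b) + (1-a)*b := by
    have : (∑ ω : Ω', if (((X1 ω).toNat + (X2 ω).toNat : ℕ) : Fin 3) = 1 then p' ω else 0)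
        = (∑ ω : Ω', if X1 ω = true ∧ X2 ω = false then p' ω else 0)
          + ∑ ω : Ω', if X1 ω = false ∧ X2 ω = true then p' ω else 0 := by
      rw [← Finset.sum_add_distrib]
      apply Finset.sum_congr rfl
      intro ω _
      cases hx1 : X1 ω <;> cases hx2 : X2 ω <;> simp [hx1, hx2]
    rw [this, hindep true false, hindep false true, hmargf X1, hmargf X2]
  have hm2 : (∑ ω : Ω', if (((X1 ω).toNat + (X2 ω).toNat : ℕ) : Fin 3) = 2
      then p' ω else 0) = a*b := by
    have : (∑ ω : Ω', if (((X1 ω).toNat + (X2 ω).toNat : ℕ) : Fin 3) = 2 then p' ω else 0)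
        = ∑ ω : Ω', if X1 ω = true ∧ X2 ω = true then p' ω else 0 := by
      apply Finset.sum_congr rfl
      intro ω _
      cases hx1 : X1 ω <;> cases hx2 : X2 ω <;> simp [hx1, hx2]
    rw [this, hindep true true]
  rw [margEnt, Fin.sum_univ_three, hm0, hm1, hm2]
  exact key_bits a b ha0 ha1 hb0 hb1

end Aux

/-- **Separation gap.**  For the triangular source `(S,T)` and any pair of independent
boolean inputs `X1, X2`, one has `H(X1+X2) ≤ 3/2 < log₂ 3 = H(S,T)`; in particular no
product input distribution `q1 × q2` achieves `H(X1+X2) ≥ H(S,T)`, so the Slepian-Wolf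
region of the source and the capacity region of the deterministic interference channel
`Y1 = X1`, `Y2 = X1 + X2` do not intersect. -/
theorem separation_gap_triangular_source
    {Ω : Type*} [Fintype Ω] (p : Ω → ℝ) (hpnn : ∀ ω, 0 ≤ p ω) (hpsum : ∑ ω : Ω, p ω = 1)
    (S T : Ω → Bool)
    (h00 : (∑ ω : Ω, if S ω = false ∧ T ω = false then p ω else 0) = 1 / 3)
    (h01 : (∑ ω : Ω, if S ω = false ∧ T ω = true then p ω else 0) = 0)
    (h10 : (∑ ω : Ω, if S ω = true ∧ T ω = false then p ω else 0) = 1 / 3)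
    (h11 : (∑ ω : Ω, if S ω = true ∧ T ω = true then p ω else 0) = 1 / 3)
    {Ω' : Type*} [Fintype Ω'] (p' : Ω' → ℝ) (hp'nn : ∀ ω, 0 ≤ p' ω)
    (hp'sum : ∑ ω : Ω', p' ω = 1) (X1 X2 : Ω' → Bool)
    (hindep : ∀ b1 b2 : Bool,
      (∑ ω : Ω', if X1 ω = b1 ∧ X2 ω = b2 then p' ω else 0) =
        (∑ ω : Ω', if X1 ω = b1 then p' ω else 0) *
          (∑ ω : Ω', if X2 ω = b2 then p' ω else 0)) :
    margEnt p' (fun ω => (((X1 ω).toNat + (X2 ω).toNat : ℕ) : Fin 3)) ≤ 3 / 2 ∧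
    (3 / 2 : ℝ) < Real.logb 2 3 ∧
    Real.logb 2 3 = margEnt p (fun ω => (S ω, T ω)) ∧
    ¬ ∃ q1 q2 : Bool → ℝ,
      (∀ b, 0 ≤ q1 b) ∧ (∑ b : Bool, q1 b) = 1 ∧ (∀ b, 0 ≤ q2 b) ∧ (∑ b : Bool, q2 b) = 1 ∧
      margEnt p (fun ω => (S ω, T ω)) ≤
        margEnt (fun bp : Bool × Bool => q1 bp.1 * q2 bp.2)
          (fun bp => ((bp.1.toNat + bp.2.toNat : ℕ) : Fin 3)) := by
  have part1 : margEnt p' (fun ω => (((X1 ω).toNat + (X2 ω).toNat : ℕ) : Fin 3)) ≤ 3 / 2 :=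
    entropy_sum_le p' hp'nn hp'sum X1 X2 hindep
  have part2 : (3 / 2 : ℝ) < Real.logb 2 3 := by
    rw [Real.lt_logb_iff_rpow_lt (by norm_num) (by norm_num)]
    have hsq : ((2:ℝ) ^ ((3:ℝ)/2)) ^ 2 = 8 := by
      rw [← Real.rpow_natCast ((2:ℝ) ^ ((3:ℝ)/2)) 2, ← Real.rpow_mul (by norm_num)]
      norm_num
    nlinarith [hsq, Real.rpow_nonneg (by norm_num : (0:ℝ) ≤ 2) ((3:ℝ)/2)]
  have part3 : Real.logb 2 3 = margEnt p (fun ω => (S ω, T ω)) := by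
    have hma : ∀ b1 b2 : Bool, (∑ ω : Ω, if (S ω, T ω) = (b1, b2) then p ω else 0)
        = ∑ ω : Ω, if S ω = b1 ∧ T ω = b2 then p ω else 0 := by
      intro b1 b2
      apply Finset.sum_congr rfl
      intro ω _
      simp [Prod.ext_iff]
    rw [margEnt, Fintype.sum_prod_type]
    simp only [Fintype.sum_bool]
    rw [hma true true, hma true false, hma false true, hma false false,
      h00, h01, h10, h11]
    have h13 : Real.logb 2 (1/3 : ℝ) = -Real.logb 2 3 := by
      rw [one_div, Real.logb, Real.logb, Real.log_inv]; ring
    rw [h13]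
    ring_nf
  refine ⟨part1, part2, part3, ?_⟩
  rintro ⟨q1, q2, hq1nn, hq1s, hq2nn, hq2s, hle⟩
  have hps : ∑ bp : Bool × Bool, q1 bp.1 * q2 bp.2 = 1 := by
    rw [Fintype.sum_prod_type]
    simp only [Fintype.sum_bool] at *
    nlinarith [hq1s, hq2s]
  have hind : ∀ b1 b2 : Bool,
      (∑ bp : Bool × Bool, if bp.1 = b1 ∧ bp.2 = b2 then q1 bp.1 * q2 bp.2 else 0) =
        (∑ bp : Bool × Bool, if bp.1 = b1 then q1 bp.1 * q2 bp.2 else 0) *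
          (∑ bp : Bool × Bool, if bp.2 = b2 then q1 bp.1 * q2 bp.2 else 0) := by
    intro b1 b2
    rw [Fintype.sum_prod_type, Fintype.sum_prod_type, Fintype.sum_prod_type]
    simp only [Fintype.sum_bool] at *
    cases b1 <;> cases b2 <;> simp
    · linear_combination (-(q1 false * q2 false * (q2 true + q2 false))) * hq1s
        - (q1 false * q2 false) * hq2s
    · linear_combination (-(q1 false * q2 true * (q2 true + q2 false))) * hq1s
        - (q1 false * q2 true) * hq2s
    · linear_combination (-(q1 true * q2 false * (q2 true + q2 false))) * hq1s
        - (q1 true * q2 false) * hq2s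
    · linear_combination (-(q1 true * q2 true * (q2 true + q2 false))) * hq1s
        - (q1 true * q2 true) * hq2s
  have := entropy_sum_le (fun bp : Bool × Bool => q1 bp.1 * q2 bp.2)
    (fun bp => mul_nonneg (hq1nn bp.1) (hq2nn bp.2)) hps
    (fun bp => bp.1) (fun bp => bp.2) hind
  rw [← part3] at hle
  have := le_trans hle this
  linarith
end
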